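/- If G is a finite group and u is a normalized unit (augmentation one unit) of finite order n in the integral group ring ZG with u ≠ 1, then the coefficient of the identity element in u is zero (Berman–Higman theorem). -/

import Mathlib

open scoped Classical
noncomputable section

variable (G : Type) [Group G] [Fintype G]

/-- permutation matrix of left translation by g -/
def permMat (g : G) : Matrix G G ℂ := Matrix.of fun a b => if a = g * b then 1 else 0

def permMatHom : G →* Matrix G G ℂ where
  toFun := permMat G
  map_one' := by
    ext a b
    simp [permMat, Matrix.one_apply]
  map_mul' g h := by
    ext a b
    simp only [permMat, Matrix.mul_apply, Matrix.of_apply]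
    rw [Finset.sum_eq_single (h * b)]
    · simp [mul_assoc]
    · intro c _ hc
      simp [hc]
    · simp

def rho : MonoidAlgebra ℤ G →+* Matrix G G ℂ :=
  MonoidAlgebra.liftNCRingHom ((Matrix.scalar G).comp (Int.castRingHom ℂ)) (permMatHom G)
    (fun x y => Matrix.scalar_commute _ (fun r' => Commute.all _ _) _)

theorem rho_apply (x : MonoidAlgebra ℤ G) (a b : G) :
    rho G x a b = ((x.coeff (a * b⁻¹) : ℤ) : ℂ) := by
  induction x using MonoidAlgebra.induction_linear with
  | zero => simp
  | add f g hf hg => simp [map_add, Matrix.add_apply, hf, hg]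
  | single g r =>
    have : rho G (MonoidAlgebra.single g r) = (Matrix.scalar G (r : ℂ)) * permMat G g := by
      simp [rho, MonoidAlgebra.liftNCRingHom]
      rfl
    rw [this]
    simp only [Matrix.scalar_apply, Matrix.diagonal_mul, permMat, Matrix.of_apply,
      MonoidAlgebra.coeff_single, Finsupp.single_apply]
    by_cases h : a = g * b
    · rw [if_pos h, if_pos (by rw [h]; group), mul_one]
    · rw [if_neg h, if_neg (fun h' => h (by subst h'; group)), mul_zero, Int.cast_zero]

theorem trace_rho (x : MonoidAlgebra ℤ G) :
    (rho G x).trace = (Fintype.card G : ℂ) * ((x.coeff 1 : ℤ) : ℂ) := by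
  rw [Matrix.trace]
  have : ∀ a : G, (rho G x).diag a = ((x.coeff 1 : ℤ) : ℂ) := by
    intro a
    rw [Matrix.diag_apply, rho_apply]
    congr 1
    group
  rw [Finset.sum_congr rfl (fun a _ => this a), Finset.sum_const, Finset.card_univ,
    nsmul_eq_mul]

variable {n : Type} [Fintype n] [DecidableEq n]

theorem eval_charpoly (M : Matrix n n ℂ) (t : ℂ) :
    M.charpoly.eval t = (t • (1 : Matrix n n ℂ) - M).det := by
  rw [Matrix.charpoly, ← Polynomial.coe_evalRingHom, RingHom.map_det]
  congr 1
  ext i j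
  by_cases h : i = j
  · subst h; simp [Matrix.charmatrix_apply_eq, Matrix.one_apply]
  · simp [Matrix.charmatrix_apply_ne _ _ _ h, Matrix.one_apply_ne h]

theorem root_pow_eq_one {M : Matrix n n ℂ} {m : ℕ} (hM : M ^ m = 1) (hm : 0 < m)
    {t : ℂ} (ht : t ∈ M.charpoly.roots) : t ^ m = 1 := by
  have h0 : (t • (1 : Matrix n n ℂ) - M).det = 0 := by
    rw [← eval_charpoly]
    exact (Polynomial.isRoot_of_mem_roots ht)
  obtain ⟨v, hv, hmv⟩ := (Matrix.exists_mulVec_eq_zero_iff).2 h0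
  have hMv : M.mulVec v = t • v := by
    have := hmv
    rw [Matrix.sub_mulVec, sub_eq_zero] at this
    rw [← this, Matrix.smul_mulVec, Matrix.one_mulVec]
  have hpow : ∀ k : ℕ, (M ^ k).mulVec v = t ^ k • v := by
    intro k
    induction k with
    | zero => simp [Matrix.one_mulVec]
    | succ k ih =>
      rw [pow_succ, ← Matrix.mulVec_mulVec, hMv, Matrix.mulVec_smul, ih, pow_succ, smul_smul,
        mul_comm]
  have := hpow m
  rw [hM, Matrix.one_mulVec] at this
  obtain ⟨i, hi⟩ := Function.ne_iff.1 hv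
  have : v i = (t ^ m) * v i := by
    conv_lhs => rw [this]
    simp
  exact mul_right_cancel₀ hi (by rw [one_mul, ← this])

theorem step_nilp (B : Matrix n n ℂ) (m r : ℕ) (hm : 0 < m) (hr : 1 ≤ r)
    (h1 : (B + 1) ^ m = 1) (hB : B ^ (r + 1) = 0) : B ^ r = 0 := by
  have hexp : (1 : Matrix n n ℂ) =
      ∑ k ∈ Finset.range (m + 1), B ^ k * (m.choose k : Matrix n n ℂ) := by
    rw [← h1, Commute.add_pow (Commute.one_right B)]
    simp
  have hmul : B ^ (r - 1) =
      ∑ k ∈ Finset.range (m + 1), B ^ (r - 1 + k) * (m.choose k : Matrix n n ℂ) := by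
    calc B ^ (r-1) = B ^ (r-1) * 1 := by rw [mul_one]
    _ = ∑ k ∈ Finset.range (m + 1), B ^ (r-1) * (B ^ k * (m.choose k : Matrix n n ℂ)) := by
        rw [← Finset.mul_sum, ← hexp]
    _ = _ := by
        refine Finset.sum_congr rfl fun k _ => ?_
        rw [← mul_assoc, ← pow_add]
  have hsplit : ∑ k ∈ Finset.range (m + 1), B ^ (r - 1 + k) * (m.choose k : Matrix n n ℂ)
      = (∑ k ∈ Finset.range 2, B ^ (r - 1 + k) * (m.choose k : Matrix n n ℂ))
        + ∑ k ∈ Finset.Ico 2 (m + 1), B ^ (r - 1 + k) * (m.choose k : Matrix n n ℂ) := by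
    rw [Finset.range_eq_Ico]
    exact (Finset.sum_Ico_consecutive _ (by omega : 0 ≤ 2) (by omega : 2 ≤ m + 1)).symm
  have hzero : ∀ k ∈ Finset.Ico 2 (m + 1),
      B ^ (r - 1 + k) * (m.choose k : Matrix n n ℂ) = 0 := by
    intro k hk
    have hk2 : 2 ≤ k := (Finset.mem_Ico.1 hk).1
    have : r - 1 + k = (r + 1) + (k - 2 + (r - 1 + k - ((r+1) + (k-2)))) := by omega
    rw [this, pow_add, hB, zero_mul, zero_mul]
  rw [hsplit, Finset.sum_eq_zero hzero, add_zero, Finset.sum_range_succ,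
    Finset.sum_range_one] at hmul
  have e1 : r - 1 + 1 = r := by omega
  rw [add_zero, e1, Nat.choose_zero_right, Nat.choose_one_right, Nat.cast_one, mul_one] at hmul
  have h2 : B ^ r * (m : Matrix n n ℂ) = 0 := by
    have := hmul.symm
    rwa [add_eq_left] at this
  have h3 : (m : ℂ) • B ^ r = 0 := by
    rw [Nat.cast_smul_eq_nsmul, nsmul_eq_mul, (Nat.cast_commute m (B ^ r)).eq]
    exact h2
  rcases smul_eq_zero.1 h3 with h | h
  · exact absurd (Nat.cast_eq_zero.1 h) (by omega)
  · exact h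

theorem unipotent_eq_zero (B : Matrix n n ℂ) (m : ℕ) (hm : 0 < m)
    (h1 : (B + 1) ^ m = 1) {N : ℕ} (hN : B ^ N = 0) : B = 0 := by
  have key : ∀ r : ℕ, B ^ (r + 1) = 0 → B = 0 := by
    intro r
    induction r with
    | zero => intro h; simpa using h
    | succ r ih =>
      intro h
      exact ih (step_nilp B m (r + 1) hm (by omega) h1 h)
  match N, hN with
  | 0, hN0 =>
    have h10 : (1 : Matrix n n ℂ) = 0 := by simpa using hN0
    calc B = B * 1 := (mul_one B).symm
    _ = B * 0 := by rw [h10]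
    _ = 0 := mul_zero B
  | (N + 1), hN0 => exact key N hN0

theorem multiset_all_eq (s : Multiset ℂ) (h1 : ∀ z ∈ s, ‖z‖ = 1)
    (hsum : ‖s.sum‖ = s.card) :
    ∀ z ∈ s, (s.card : ℂ) * z = s.sum := by
  intro z₀ hz₀
  have hcard : 1 ≤ Multiset.card s := Multiset.card_pos_iff_exists_mem.2 ⟨z₀, hz₀⟩
  set S := s.sum with hS
  set N := Multiset.card s with hN
  have hS0 : S ≠ 0 := by
    intro h
    rw [h, norm_zero] at hsum
    have : (N : ℝ) = 0 := hsum.symm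
    rw [Nat.cast_eq_zero] at this
    omega
  set w := (N : ℂ) / S with hw
  have habsw : ‖w‖ = 1 := by
    rw [hw, norm_div, hsum, Complex.norm_natCast, div_self]
    exact_mod_cast by omega
  have hwS : w * S = (N : ℂ) := by
    rw [hw, div_mul_cancel₀ _ hS0]
  set t := s.erase z₀ with ht
  have hst : s = z₀ ::ₘ t := (Multiset.cons_erase hz₀).symm
  have hcardt : Multiset.card t = N - 1 := by
    rw [ht, Multiset.card_erase_of_mem hz₀]; rfl
  have hbound : ∀ z ∈ s, (w * z).re ≤ 1 := by
    intro z hz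
    calc (w * z).re ≤ ‖w * z‖ := Complex.re_le_norm _
    _ = 1 := by rw [norm_mul, habsw, h1 z hz, mul_one]
  have htsum : (t.map (fun z => (w * z).re)).sum ≤ (N - 1 : ℝ) := by
    calc (t.map (fun z => (w * z).re)).sum ≤ (Multiset.card (t.map fun z => (w * z).re)) • (1:ℝ) :=
        Multiset.sum_le_card_nsmul _ _ (by
          intro x hx
          obtain ⟨z, hz, rfl⟩ := Multiset.mem_map.1 hx
          exact hbound z (by rw [hst]; exact Multiset.mem_cons_of_mem hz))
    _ = (N - 1 : ℝ) := by
        rw [Multiset.card_map, hcardt, nsmul_eq_mul, mul_one, Nat.cast_sub hcard, Nat.cast_one]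
  have hresum : (w * z₀).re + (t.map (fun z => (w * z).re)).sum = (N : ℝ) := by
    have h2 : w * S = w * z₀ + (t.map (fun z => w * z)).sum := by
      rw [hS, hst, Multiset.sum_cons, mul_add]
      congr 1
      rw [show (fun z => w * z) = (fun z => w * id z) from rfl, Multiset.sum_map_mul_left,
        Multiset.map_id]
    have h3 := congrArg Complex.re (h2.symm.trans hwS)
    rw [Complex.add_re, Complex.natCast_re] at h3
    rw [← h3]
    congr 1
    have : ∀ u : Multiset ℂ, (u.map (fun z => (w * z).re)).sum = (u.map (fun z => w * z)).sum.re := by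
      intro u
      induction u using Multiset.induction with
      | empty => simp
      | cons a u ih => simp only [Multiset.map_cons, Multiset.sum_cons, Complex.add_re, ih]
    exact this t
  have hge : (1 : ℝ) ≤ (w * z₀).re := by linarith
  have hre : (w * z₀).re = 1 := le_antisymm (hbound z₀ hz₀) hge
  have habs : ‖w * z₀‖ = 1 := by rw [norm_mul, habsw, h1 z₀ hz₀, mul_one]
  have him : (w * z₀).im = 0 := by
    have hns : Complex.normSq (w * z₀) = 1 := by rw [← Complex.sq_norm, habs, one_pow]
    rw [Complex.normSq_apply] at hns
    have : (w * z₀).im * (w * z₀).im = 0 := by nlinarith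
    exact mul_self_eq_zero.1 this
  have hwz : w * z₀ = 1 := Complex.ext (by rw [hre]; rfl) (by rw [him]; rfl)
  have : (N : ℂ) / S * z₀ = 1 := hwz
  field_simp at this
  linear_combination this

theorem berman_higman (G : Type) [Group G] [Fintype G]
    (u : (MonoidAlgebra ℤ G)ˣ) (n : ℕ) (hn : 0 < n) (hord : orderOf u = n)
    (haug : ∑ g : G, (u : MonoidAlgebra ℤ G).coeff g = 1)
    (hne : u ≠ 1) :
    (u : MonoidAlgebra ℤ G).coeff (1 : G) = 0 := by
  by_contra hc0
  set N := Fintype.card G with hNdef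
  have hN0 : 0 < N := Fintype.card_pos
  set c : ℤ := (u : MonoidAlgebra ℤ G).coeff 1 with hc
  set M := rho G (u : MonoidAlgebra ℤ G) with hMdef
  -- M has finite order
  have hun : ((u : MonoidAlgebra ℤ G)) ^ n = 1 := by
    rw [← Units.val_pow_eq_pow_val, ← hord, pow_orderOf_eq_one, Units.val_one]
  have hMn : M ^ n = 1 := by
    rw [hMdef, ← map_pow, hun, map_one]
  -- roots of the characteristic polynomial
  have hsplits : M.charpoly.Splits := IsAlgClosed.splits _
  have hcardroots : Multiset.card M.charpoly.roots = N := by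
    rw [Polynomial.splits_iff_card_roots.1 hsplits, Matrix.charpoly_natDegree_eq_dim]
  have hroots1 : ∀ z ∈ M.charpoly.roots, ‖z‖ = 1 := by
    intro z hz
    have hzn : z ^ n = 1 := root_pow_eq_one hMn hn hz
    have habs : ‖z‖ ^ n = 1 := by rw [← norm_pow, hzn, norm_one]
    by_contra hne1
    rcases lt_or_gt_of_ne hne1 with h | h
    · have := pow_lt_one₀ (norm_nonneg z) h hn.ne'
      rw [habs] at this; exact lt_irrefl _ this
    · have := one_lt_pow₀ h hn.ne'
      rw [habs] at this; exact lt_irrefl _ this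
  -- trace
  have htr : M.trace = (N : ℂ) * (c : ℂ) := trace_rho G _
  have hS : M.charpoly.roots.sum = (N : ℂ) * (c : ℂ) := by
    rw [← Matrix.trace_eq_sum_roots_charpoly, htr]
  -- triangle inequality
  have tri : ∀ v : Multiset ℂ, (∀ z ∈ v, ‖z‖ = 1) →
      ‖v.sum‖ ≤ Multiset.card v := by
    intro v
    induction v using Multiset.induction with
    | empty => simp
    | cons a v ih =>
      intro h
      rw [Multiset.sum_cons, Multiset.card_cons]
      calc ‖a + v.sum‖ ≤ ‖a‖ + ‖v.sum‖ := norm_add_le _ _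
      _ ≤ 1 + Multiset.card v := by
          gcongr
          · exact le_of_eq (h a (Multiset.mem_cons_self a v))
          · exact ih fun z hz => h z (Multiset.mem_cons_of_mem hz)
      _ = (Multiset.card v + 1 : ℕ) := by push_cast; ring
  have hle : ‖M.charpoly.roots.sum‖ ≤ (N : ℝ) := by
    have := tri M.charpoly.roots hroots1
    rwa [hcardroots] at this
  -- |c| = 1
  have hcabs : |c| = 1 := by
    have h1 : (N : ℝ) * ‖((c : ℤ) : ℂ)‖ ≤ (N : ℝ) := by
      have : ‖(N : ℂ) * (c : ℂ)‖ = (N : ℝ) * ‖((c : ℤ) : ℂ)‖ := by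
        rw [norm_mul, Complex.norm_natCast]
      rw [← this, ← hS]
      exact hle
    have h2 : ‖((c : ℤ) : ℂ)‖ ≤ 1 := by
      have hN' : (0 : ℝ) < N := by exact_mod_cast hN0
      nlinarith
    have h3 : ‖((c : ℤ) : ℂ)‖ = |(c : ℝ)| := by
      rw [Complex.norm_intCast]
    have h4 : |(c : ℝ)| ≤ 1 := by rw [← h3]; exact h2
    have h5 : (1 : ℝ) ≤ |(c : ℝ)| := by
      have := Int.one_le_abs (by simpa using hc0)
      exact_mod_cast (by push_cast; exact_mod_cast this : (1:ℝ) ≤ (|c| : ℝ))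
    have : |(c : ℝ)| = 1 := le_antisymm h4 h5
    exact_mod_cast (by push_cast at this ⊢; exact this : (|c| : ℝ) = 1)
  have habs1 : ‖((c : ℤ) : ℂ)‖ = 1 := by
    rw [Complex.norm_intCast]
    exact_mod_cast (by push_cast; exact_mod_cast hcabs : (|c| : ℝ) = 1)
  have hSabs : ‖M.charpoly.roots.sum‖ = Multiset.card M.charpoly.roots := by
    rw [hS, norm_mul, Complex.norm_natCast, habs1, mul_one, hcardroots]
  -- all roots are equal to c
  have hallc : ∀ z ∈ M.charpoly.roots, z = ((c : ℤ) : ℂ) := by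
    intro z hz
    have := multiset_all_eq M.charpoly.roots hroots1 hSabs z hz
    rw [hS, hcardroots] at this
    have hN' : ((N : ℂ)) ≠ 0 := by exact_mod_cast hN0.ne'
    exact mul_left_cancel₀ hN' this
  -- charpoly = (X - C c)^N
  have hfact : M.charpoly = (Polynomial.X - Polynomial.C ((c : ℤ) : ℂ)) ^ N := by
    have heq := hsplits.eq_prod_roots_of_monic M.charpoly_monic
    have hmap : Multiset.map (fun a => Polynomial.X - Polynomial.C a) M.charpoly.roots
        = Multiset.map (fun _ => Polynomial.X - Polynomial.C ((c : ℤ) : ℂ)) M.charpoly.roots :=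
      Multiset.map_congr rfl (fun z hz => by rw [hallc z hz])
    rw [heq, hmap, Multiset.map_const', Multiset.prod_replicate, hcardroots]
  -- Cayley-Hamilton
  set ε : ℂ := ((c : ℤ) : ℂ) with hε
  have hcases : c = 1 ∨ c = -1 := by
    rcases (abs_eq (by norm_num : (0:ℤ) ≤ 1)).1 hcabs with h | h
    · exact Or.inl h
    · exact Or.inr h
  have hε2 : ε ^ 2 = 1 := by
    rcases hcases with h | h <;> rw [hε, h] <;> norm_num
  have hCH : (M - ε • 1) ^ N = 0 := by
    have h := Matrix.aeval_self_charpoly M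
    rw [hfact] at h
    rw [map_pow, map_sub, Polynomial.aeval_X, Polynomial.aeval_C,
      Algebra.algebraMap_eq_smul_one] at h
    exact h
  -- unipotent argument
  set B : Matrix G G ℂ := ε • M - 1 with hB
  have hBN : B ^ N = 0 := by
    have hfac : B = ε • (M - ε • 1) := by
      rw [hB, smul_sub, smul_smul, ← pow_two, hε2, one_smul]
    rw [hfac, smul_pow, hCH, smul_zero]
  have hBone : (B + 1) ^ (2 * n) = 1 := by
    have : B + 1 = ε • M := by rw [hB, sub_add_cancel]
    rw [this, smul_pow]
    have h1 : ε ^ (2 * n) = 1 := by rw [pow_mul, hε2, one_pow]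
    have h2 : M ^ (2 * n) = 1 := by rw [mul_comm, pow_mul, hMn, one_pow]
    rw [h1, h2, one_smul]
  have hB0 : B = 0 := unipotent_eq_zero B (2 * n) (by omega) hBone hBN
  have hMε : M = ε • 1 := by
    have h1 : ε • M = 1 := by rw [← sub_add_cancel (ε • M) 1, ← hB, hB0, zero_add]
    have := congrArg (fun X => ε • X) h1
    simpa [smul_smul, ← pow_two, hε2] using this
  -- read off coefficients
  have hcoeff : ∀ g : G, (u : MonoidAlgebra ℤ G).coeff g = if g = 1 then c else 0 := by
    intro g
    have h1 : M g 1 = (((u : MonoidAlgebra ℤ G).coeff g : ℤ) : ℂ) := by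
      rw [hMdef, rho_apply]
      norm_num
    have h2 : M g 1 = if g = 1 then ε else 0 := by
      rw [hMε]
      by_cases h : g = 1
      · subst h; simp
      · simp [Matrix.one_apply_ne h, h]
    rw [h1, hε] at h2
    by_cases h : g = 1
    · rw [if_pos h] at h2 ⊢
      exact_mod_cast h2
    · rw [if_neg h] at h2 ⊢
      exact_mod_cast h2
  -- augmentation
  have hsum1 : ∑ g : G, (u : MonoidAlgebra ℤ G).coeff g = c := by
    rw [Finset.sum_congr rfl (fun g _ => hcoeff g)]
    simp
  have hc1 : c = 1 := by rw [← hsum1, haug]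
  -- conclude u = 1
  apply hne
  apply Units.ext
  have : (u : MonoidAlgebra ℤ G) = 1 := by
    apply MonoidAlgebra.ext; apply Finsupp.ext
    intro g
    rw [hcoeff g, hc1]
    rw [MonoidAlgebra.one_def]
    rw [MonoidAlgebra.coeff_single, Finsupp.single_apply]
    by_cases h : g = 1
    · subst h; simp
    · rw [if_neg h, if_neg (fun h' : (1:G) = g => h h'.symm)]
  exact this
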